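/- Let k be a field of characteristic p > 0 and n a positive integer not divisible by p. Then for any k-vector space V, the natural map from the degree-n part of the free operadic Lie algebra on V to V^{⊗n} is injective; i.e., (V^{⊗n} ⊗ Lie_n)_{S_n} → V^{⊗n} is injective. -/

import Mathlib

open MonoidAlgebra TensorProduct PiTensorProduct

noncomputable section

noncomputable def cycleDown (n j : ℕ) : Equiv.Perm (Fin n) :=
  if h : j < n then ((⟨j, h⟩ : Fin n).cycleRange)⁻¹ else 1

/-- The Dynkin element `θ_n = (1 - (2 1))(1 - (3 2 1)) ⋯ (1 - (n ... 1))`. -/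
noncomputable def dynkin (k : Type) [CommRing k] (n : ℕ) :
    MonoidAlgebra k (Equiv.Perm (Fin n)) :=
  ((List.range (n - 1)).map (fun j =>
    (1 : MonoidAlgebra k (Equiv.Perm (Fin n))) -
      MonoidAlgebra.of k (Equiv.Perm (Fin n)) (cycleDown n (j + 1)))).prod

namespace DSW
variable (k : Type) [CommRing k] (n : ℕ)
abbrev FA := MonoidAlgebra k (FreeMonoid (Fin n))
def Xg (i : Fin n) : FA k n := MonoidAlgebra.single (FreeMonoid.of i) 1



def rb : List (Fin n) → FA k n
  | [] => 0
  | [i] => Xg k n i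
  | i :: x :: t => rb (x :: t) * Xg k n i - Xg k n i * rb (x :: t)

def la (l : List (Fin n)) : FA k n := rb k n l.reverse

lemma single_ofList_mul (w w' : List (Fin n)) (c c' : k) :
    MonoidAlgebra.single (FreeMonoid.ofList w) c * MonoidAlgebra.single (FreeMonoid.ofList w') c'
      = MonoidAlgebra.single (FreeMonoid.ofList (w ++ w')) (c * c') := by
  rw [MonoidAlgebra.single_mul_single, FreeMonoid.ofList_append]

lemma Xg_eq (i : Fin n) : Xg k n i = MonoidAlgebra.single (FreeMonoid.ofList [i]) 1 := by
  rw [Xg, FreeMonoid.ofList_singleton]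

lemma la_append (w : List (Fin n)) (hw : w ≠ []) (i : Fin n) :
    la k n (w ++ [i]) = la k n w * Xg k n i - Xg k n i * la k n w := by
  obtain ⟨x, t, hxt⟩ : ∃ x t, w.reverse = x :: t := by
    cases h : w.reverse with
    | nil => exact absurd (by simpa using congrArg List.reverse h) hw
    | cons x t => exact ⟨x, t, rfl⟩
  have : (w ++ [i]).reverse = i :: (x :: t) := by
    rw [List.reverse_append, hxt]; rfl
  rw [la, la, this, hxt]
  rfl

def abr : FA k n →ₗ[k] FA k n :=
  (Finsupp.lsum k fun w => LinearMap.toSpanSingleton k _ (la k n (FreeMonoid.toList w))).comp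
    (MonoidAlgebra.coeffLinearEquiv k).toLinearMap

lemma abr_single (w : List (Fin n)) (c : k) :
    abr k n (MonoidAlgebra.single (FreeMonoid.ofList w) c) = c • la k n w := by
  rw [abr, LinearMap.comp_apply, LinearEquiv.coe_coe, MonoidAlgebra.coeffLinearEquiv_apply,
    MonoidAlgebra.coeff_single]
  exact Finsupp.lsum_single k _ _ _

lemma abr_single' (w : FreeMonoid (Fin n)) (c : k) :
    abr k n (MonoidAlgebra.single w c) = c • la k n (FreeMonoid.toList w) := by
  rw [abr, LinearMap.comp_apply, LinearEquiv.coe_coe, MonoidAlgebra.coeffLinearEquiv_apply,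
    MonoidAlgebra.coeff_single]
  exact Finsupp.lsum_single k _ _ _


inductive IsLie : FA k n → Prop
  | X : ∀ i, IsLie (Xg k n i)
  | brk : ∀ a b, IsLie a → IsLie b → IsLie (a * b - b * a)

def Pos : Submodule k (FA k n) :=
  Submodule.span k {x | ∃ w : List (Fin n), w ≠ [] ∧
    x = MonoidAlgebra.single (FreeMonoid.ofList w) 1}

lemma single_mul_mem_pos (w : List (Fin n)) (hw : w ≠ []) {u : FA k n} (hu : u ∈ Pos k n) :
    MonoidAlgebra.single (FreeMonoid.ofList w) (1:k) * u ∈ Pos k n := by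
  induction hu using Submodule.span_induction with
  | mem x hx =>
    obtain ⟨w', hw', rfl⟩ := hx
    rw [single_ofList_mul]
    exact Submodule.subset_span ⟨w ++ w', by simp [hw], by rw [mul_one]⟩
  | zero => rw [mul_zero]; exact zero_mem _
  | add x y _ _ hx hy => rw [mul_add]; exact add_mem hx hy
  | smul c x _ hx => rw [mul_smul_comm]; exact Submodule.smul_mem _ _ hx

lemma pos_mul {v u : FA k n} (hv : v ∈ Pos k n) (hu : u ∈ Pos k n) : v * u ∈ Pos k n := by
  induction hv using Submodule.span_induction with
  | mem x hx =>
    obtain ⟨w, hw, rfl⟩ := hx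
    exact single_mul_mem_pos k n w hw hu
  | zero => rw [zero_mul]; exact zero_mem _
  | add x y _ _ hx hy => rw [add_mul]; exact add_mem hx hy
  | smul c x _ hx => rw [smul_mul_assoc]; exact Submodule.smul_mem _ _ hx

lemma lie_mem_pos {x : FA k n} (h : IsLie k n x) : x ∈ Pos k n := by
  induction h with
  | X i => exact Submodule.subset_span ⟨[i], by simp, Xg_eq k n i⟩
  | brk a b _ _ ha hb => exact sub_mem (pos_mul k n ha hb) (pos_mul k n hb ha)

lemma lemmaA {c : FA k n} (hc : IsLie k n c) :
    ∀ v ∈ Pos k n, abr k n (v * c) = abr k n v * c - c * abr k n v := by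
  induction hc with
  | X i =>
    intro v hv
    induction hv using Submodule.span_induction with
    | mem x hx =>
      obtain ⟨w, hw, rfl⟩ := hx
      rw [Xg_eq, single_ofList_mul, mul_one, abr_single, abr_single, one_smul, one_smul,
        ← Xg_eq, la_append k n w hw]
    | zero => simp
    | add x y _ _ hx hy =>
      rw [add_mul, map_add, map_add, hx, hy]; noncomm_ring
    | smul a x _ hx =>
      rw [smul_mul_assoc, map_smul, map_smul, smul_mul_assoc, mul_smul_comm, hx, smul_sub]
  | brk c₁ c₂ hc₁ hc₂ ih₁ ih₂ =>
    intro v hv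
    have h1 : v * c₁ ∈ Pos k n := pos_mul k n hv (lie_mem_pos k n hc₁)
    have h2 : v * c₂ ∈ Pos k n := pos_mul k n hv (lie_mem_pos k n hc₂)
    have e1 : v * (c₁ * c₂ - c₂ * c₁) = (v * c₁) * c₂ - (v * c₂) * c₁ := by noncomm_ring
    rw [e1, map_sub, ih₂ _ h1, ih₁ _ h2, ih₁ v hv, ih₂ v hv]
    noncomm_ring




def q (m : ℕ) : List (Fin n) := (List.finRange n).take m

lemma q_length (m : ℕ) (h : m ≤ n) : (q n m).length = m := by
  simp [q, List.length_take, List.length_finRange, Nat.min_eq_left h]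

lemma q_getElem (m i : ℕ) (hi : i < m) (hin : i < n) (h : i < (q n m).length) :
    GetElem.getElem (q n m) i h = ⟨i, hin⟩ := by
  simp [q, List.getElem_take, List.getElem_finRange]

lemma cycleDown_apply_zero (j : ℕ) (hj : j < n) (h0 : 0 < n) :
    cycleDown n j ⟨0, h0⟩ = ⟨j, hj⟩ := by
  cases n with
  | zero => omega
  | succ nn =>
    rw [cycleDown, dif_pos hj]
    rw [Equiv.Perm.inv_eq_iff_eq]
    have : (⟨0, h0⟩ : Fin (nn+1)) = 0 := rfl
    rw [this, Fin.cycleRange_self]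

lemma cycleDown_apply_succ (j : ℕ) (hj : j < n) (i : ℕ) (hij : i + 1 ≤ j)
    (h1 : i + 1 < n) (h2 : i < n) :
    cycleDown n j ⟨i + 1, h1⟩ = ⟨i, h2⟩ := by
  cases n with
  | zero => omega
  | succ nn =>
    rw [cycleDown, dif_pos hj]
    rw [Equiv.Perm.inv_eq_iff_eq]
    have hlt : (⟨i, h2⟩ : Fin (nn+1)) < ⟨j, hj⟩ := by
      simp only [Fin.mk_lt_mk]; omega
    rw [Fin.cycleRange_of_lt hlt]
    symm
    apply Fin.ext
    rw [Fin.val_add_one_of_lt (by simp [Fin.lt_iff_val_lt_val, Fin.last]; omega)]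

lemma map_cycleDown_q (j : ℕ) (hj : j < n) :
    (q n (j + 1)).map (cycleDown n j) = ⟨j, hj⟩ :: q n j := by
  have h0 : 0 < n := by omega
  apply List.ext_getElem
  · simp [List.length_map, q_length n (j+1) hj, q_length n j (le_of_lt hj)]
  · intro i h1 h2
    rw [List.getElem_map]
    match i with
    | 0 =>
      rw [q_getElem n (j+1) 0 (by omega) h0, cycleDown_apply_zero n j hj h0]
      rfl
    | i + 1 =>
      have hi1 : i + 1 < (q n (j+1)).length := by simpa using h1
      have hij : i + 1 ≤ j := by
        have := q_length n (j+1) hj; omega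
      have hin : i + 1 < n := by omega
      rw [q_getElem n (j+1) (i+1) (by omega) hin,
        cycleDown_apply_succ n j hj i hij hin (by omega)]
      simp only [List.getElem_cons_succ]
      rw [q_getElem n j i (by omega) (by omega)]





def rho (σ : Equiv.Perm (Fin n)) : FA k n →ₐ[k] FA k n :=
  MonoidAlgebra.mapDomainAlgHom k k (FreeMonoid.map σ)

lemma rho_single (σ : Equiv.Perm (Fin n)) (w : FreeMonoid (Fin n)) (c : k) :
    rho k n σ (MonoidAlgebra.single w c) = MonoidAlgebra.single (FreeMonoid.map σ w) c := by
  simp [rho, MonoidAlgebra.mapDomainAlgHom, MonoidAlgebra.mapDomainRingHom,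
    Finsupp.mapDomain_single]

lemma rho_one : rho k n 1 = AlgHom.id k (FA k n) := by
  have : FreeMonoid.map ⇑(1 : Equiv.Perm (Fin n)) = MonoidHom.id _ := by
    rw [Equiv.Perm.coe_one, FreeMonoid.map_id]
  rw [rho, this, MonoidAlgebra.mapDomainAlgHom_id]

lemma rho_mul (σ τ : Equiv.Perm (Fin n)) :
    rho k n (σ * τ) = (rho k n σ).comp (rho k n τ) := by
  have : FreeMonoid.map ⇑(σ * τ) = (FreeMonoid.map σ).comp (FreeMonoid.map τ) := by
    rw [← FreeMonoid.map_comp]; rfl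
  rw [rho, this, MonoidAlgebra.mapDomainAlgHom_comp]; rfl

def rhoM : Equiv.Perm (Fin n) →* Module.End k (FA k n) where
  toFun σ := (rho k n σ).toLinearMap
  map_one' := by show (rho k n 1).toLinearMap = _; rw [rho_one]; rfl
  map_mul' σ τ := by show (rho k n (σ * τ)).toLinearMap = _; rw [rho_mul]; rfl

def actA : MonoidAlgebra k (Equiv.Perm (Fin n)) →ₐ[k] Module.End k (FA k n) :=
  MonoidAlgebra.lift k _ _ (rhoM k n)

lemma actA_single (σ : Equiv.Perm (Fin n)) (c : k) (v : FA k n) :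
    actA k n (MonoidAlgebra.single σ c) v = c • rho k n σ v := by
  simp [actA, MonoidAlgebra.lift_apply, rhoM]

def wordOf (σ : Equiv.Perm (Fin n)) : FreeMonoid (Fin n) :=
  FreeMonoid.ofList ((List.finRange n).map σ)

lemma wordOf_injective : Function.Injective (wordOf n) := by
  intro σ τ h
  ext i
  have := congrArg (fun l => (FreeMonoid.toList l)[(i : ℕ)]?) h
  have h2 : σ i = τ i := by
    simpa [wordOf, List.getElem?_map] using this
  exact congrArg Fin.val h2

def Phi : MonoidAlgebra k (Equiv.Perm (Fin n)) →ₗ[k] FA k n :=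
  MonoidAlgebra.mapDomainLinearMap k k (wordOf n)

lemma Phi_injective : Function.Injective (Phi k n) :=
  fun _ _ h => MonoidAlgebra.coeff_injective
    (Finsupp.mapDomain_injective (wordOf_injective n) (congrArg MonoidAlgebra.coeff h))

lemma Phi_single (σ : Equiv.Perm (Fin n)) (c : k) :
    Phi k n (MonoidAlgebra.single σ c) = MonoidAlgebra.single (wordOf n σ) c := by
  exact MonoidAlgebra.mapDomainLinearMap_single _ _ _


lemma q_succ (m : ℕ) (h : m < n) :
    q n (m + 1) = q n m ++ [(⟨m, h⟩ : Fin n)] := by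
  rw [q, q, List.take_succ]
  congr 1
  rw [List.getElem?_eq_getElem (by simpa using h)]
  simp [List.getElem_finRange]

lemma q_ne_nil (m : ℕ) (hm : 0 < m) (h : m ≤ n) : q n m ≠ [] := by
  intro hc
  have := q_length n m h
  rw [hc] at this
  simp at this
  omega

lemma isLie_la_q : ∀ m, m < n → IsLie k n (la k n (q n (m + 1)))
  | 0, h => by
    have : q n 1 = [(⟨0, h⟩ : Fin n)] := by
      have := q_succ n 0 h
      simpa [q] using this
    rw [this]
    show IsLie k n (rb k n [(⟨0, h⟩ : Fin n)])
    rw [rb]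
    exact IsLie.X _
  | (m+1), h => by
    rw [q_succ n (m+1) h, la_append k n _ (q_ne_nil n (m+1) (by omega) (by omega))]
    exact IsLie.brk _ _ (isLie_la_q m (by omega)) (IsLie.X _)

lemma abr_Xg (i : Fin n) : abr k n (Xg k n i) = Xg k n i := by
  rw [Xg_eq, abr_single, one_smul]
  show rb k n [i] = _
  rw [rb, Xg_eq]

lemma abr_la_q : ∀ m, m < n → abr k n (la k n (q n (m + 1))) = (m + 1 : ℕ) • la k n (q n (m + 1))
  | 0, h => by
    have h1 : q n 1 = [(⟨0, h⟩ : Fin n)] := by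
      have := q_succ n 0 h
      simpa [q] using this
    have h2 : la k n (q n 1) = Xg k n ⟨0, h⟩ := by
      rw [h1]; show rb k n [(⟨0, h⟩ : Fin n)] = _; rw [rb]
    rw [h2, abr_Xg, one_nsmul]
  | (m+1), h => by
    have hm : m < n := by omega
    have hpos : la k n (q n (m+1)) ∈ Pos k n := lie_mem_pos k n (isLie_la_q k n m hm)
    have hXpos : Xg k n (⟨m+1, h⟩ : Fin n) ∈ Pos k n :=
      lie_mem_pos k n (IsLie.X _)
    have e1 : abr k n (la k n (q n (m+1)) * Xg k n ⟨m+1, h⟩)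
        = abr k n (la k n (q n (m+1))) * Xg k n ⟨m+1, h⟩
          - Xg k n ⟨m+1, h⟩ * abr k n (la k n (q n (m+1))) :=
      lemmaA k n (IsLie.X _) _ hpos
    have e2 : abr k n (Xg k n ⟨m+1, h⟩ * la k n (q n (m+1)))
        = abr k n (Xg k n ⟨m+1, h⟩) * la k n (q n (m+1))
          - la k n (q n (m+1)) * abr k n (Xg k n ⟨m+1, h⟩) :=
      lemmaA k n (isLie_la_q k n m hm) _ hXpos
    rw [q_succ n (m+1) h, la_append k n _ (q_ne_nil n (m+1) (by omega) (by omega)),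
      map_sub, e1, e2, abr_Xg, abr_la_q m hm]
    generalize la k n (q n (m+1)) = A
    generalize Xg k n (⟨m+1, h⟩ : Fin n) = B
    rw [smul_mul_assoc, mul_smul_comm, smul_sub, succ_nsmul (A * B) (m+1),
      succ_nsmul (B * A) (m+1)]
    abel

lemma rho_Xg (σ : Equiv.Perm (Fin n)) (i : Fin n) :
    rho k n σ (Xg k n i) = Xg k n (σ i) := by
  rw [Xg, rho_single]
  congr 1

lemma rho_rb (σ : Equiv.Perm (Fin n)) :
    ∀ l : List (Fin n), rho k n σ (rb k n l) = rb k n (l.map σ)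
  | [] => by rw [rb]; simp [rb]
  | [i] => by rw [rb]; simp only [List.map_cons, List.map_nil, rb, rho_Xg]
  | i :: x :: t => by
    rw [rb, map_sub, _root_.map_mul, _root_.map_mul, rho_Xg, rho_rb σ (x :: t)]
    simp only [List.map_cons]
    rw [rb]

lemma rho_la (σ : Equiv.Perm (Fin n)) (l : List (Fin n)) :
    rho k n σ (la k n l) = la k n (l.map σ) := by
  rw [la, la, rho_rb, List.map_reverse]

lemma abr_rho (σ : Equiv.Perm (Fin n)) (v : FA k n) :
    abr k n (rho k n σ v) = rho k n σ (abr k n v) := by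
  induction v using MonoidAlgebra.induction_linear with
  | zero => simp
  | add x y hx hy => simp only [_root_.map_add, hx, hy]
  | single w c =>
    rw [rho_single, abr_single', abr_single', map_smul, rho_la]
    simp [FreeMonoid.toList_map]

lemma abr_actA (x : MonoidAlgebra k (Equiv.Perm (Fin n))) (v : FA k n) :
    abr k n (actA k n x v) = actA k n x (abr k n v) := by
  induction x using MonoidAlgebra.induction_linear with
  | zero => simp
  | add x y hx hy =>
    rw [map_add]
    show abr k n ((actA k n x + actA k n y) v) = (actA k n x + actA k n y) (abr k n v)
    rw [LinearMap.add_apply, LinearMap.add_apply, map_add, hx, hy]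
  | single σ c => rw [actA_single, actA_single, map_smul, abr_rho]

/-- partial Dynkin products -/
def Pd (m : ℕ) : MonoidAlgebra k (Equiv.Perm (Fin n)) :=
  ((List.range m).map (fun j =>
    (1 : MonoidAlgebra k (Equiv.Perm (Fin n))) -
      MonoidAlgebra.of k (Equiv.Perm (Fin n)) (cycleDown n (j + 1)))).prod

lemma Pd_succ (m : ℕ) : Pd k n (m + 1) = Pd k n m *
    ((1 : MonoidAlgebra k (Equiv.Perm (Fin n))) -
      MonoidAlgebra.of k (Equiv.Perm (Fin n)) (cycleDown n (m + 1))) := by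
  rw [Pd, Pd, List.range_succ, List.map_append, List.prod_append]
  simp

lemma dynkin_eq_Pd : dynkin k n = Pd k n (n - 1) := rfl

lemma cycleDown_fix (j : ℕ) (i : Fin n) (hji : j < (i : ℕ)) :
    cycleDown n j i = i := by
  rcases Nat.lt_or_ge j n with hj | hj
  · cases n with
    | zero => exact absurd i.2 (by omega)
    | succ nn =>
      rw [cycleDown, dif_pos hj, Equiv.Perm.inv_eq_iff_eq,
        Fin.cycleRange_of_gt (by simpa [Fin.lt_iff_val_lt_val] using hji)]
  · rw [cycleDown, dif_neg (by omega)]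
    rfl

lemma actA_of_apply (σ : Equiv.Perm (Fin n)) (v : FA k n) :
    actA k n (MonoidAlgebra.of k (Equiv.Perm (Fin n)) σ) v = rho k n σ v := by
  show actA k n (MonoidAlgebra.single σ 1) v = _
  rw [actA_single, one_smul]

lemma actA_one_apply (v : FA k n) : actA k n 1 v = v := by
  rw [_root_.map_one]
  rfl

lemma Pd_zero : Pd k n 0 = 1 := by simp [Pd]

lemma actA_one_sub_of (σ : Equiv.Perm (Fin n)) (v : FA k n) :
    actA k n ((1 : MonoidAlgebra k (Equiv.Perm (Fin n))) -
      MonoidAlgebra.of k (Equiv.Perm (Fin n)) σ) v = v - rho k n σ v := by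
  rw [_root_.map_sub, LinearMap.sub_apply, actA_one_apply, actA_of_apply]

lemma actA_Pd_comm (m : ℕ) (i : Fin n) (him : m < (i : ℕ)) :
    (∀ v, actA k n (Pd k n m) (v * Xg k n i) = actA k n (Pd k n m) v * Xg k n i) ∧
    (∀ v, actA k n (Pd k n m) (Xg k n i * v) = Xg k n i * actA k n (Pd k n m) v) := by
  induction m with
  | zero =>
    constructor <;> intro v <;> rw [Pd_zero, actA_one_apply, actA_one_apply]
  | succ m ih =>
    obtain ⟨ih1, ih2⟩ := ih (by omega)
    have hfix : cycleDown n (m + 1) i = i := cycleDown_fix n (m+1) i (by omega)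
    constructor <;> intro v
    · rw [Pd_succ, _root_.map_mul (actA k n) (Pd k n m) _, Module.End.mul_apply,
        Module.End.mul_apply, actA_one_sub_of, actA_one_sub_of,
        _root_.map_mul (rho k n (cycleDown n (m+1))) v (Xg k n i), rho_Xg, hfix,
        ← sub_mul, ih1]
    · rw [Pd_succ, _root_.map_mul (actA k n) (Pd k n m) _, Module.End.mul_apply,
        Module.End.mul_apply, actA_one_sub_of, actA_one_sub_of,
        _root_.map_mul (rho k n (cycleDown n (m+1))) (Xg k n i) v, rho_Xg, hfix,
        ← mul_sub, ih2]

/-- the standard multilinear word -/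
def Ew (m : ℕ) : FA k n := MonoidAlgebra.single (FreeMonoid.ofList (q n m)) 1

lemma actA_Pd_Ew : ∀ m, m + 1 ≤ n →
    actA k n (Pd k n m) (Ew k n (m + 1)) = la k n (q n (m + 1))
  | 0, h => by
    have h1 : q n 1 = [(⟨0, h⟩ : Fin n)] := by
      have := q_succ n 0 h
      simpa [q] using this
    rw [Pd_zero, actA_one_apply, Ew, h1, ← Xg_eq]
    show _ = rb k n [(⟨0, h⟩ : Fin n)]
    rw [rb]
  | (m+1), h => by
    have hm : m + 1 ≤ n := by omega
    have hmn : m + 1 < n := by omega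
    have hE2 : Ew k n (m + 2) = Ew k n (m+1) * Xg k n ⟨m+1, hmn⟩ := by
      rw [Ew, Ew, Xg_eq, single_ofList_mul, mul_one, q_succ n (m+1) hmn]
    have hrho : rho k n (cycleDown n (m+1)) (Ew k n (m + 2))
        = Xg k n ⟨m+1, hmn⟩ * Ew k n (m+1) := by
      rw [Ew, rho_single]
      have : FreeMonoid.map (cycleDown n (m+1)) (FreeMonoid.ofList (q n (m+2)))
          = FreeMonoid.ofList ((⟨m+1, hmn⟩ : Fin n) :: q n (m+1)) := by
        apply FreeMonoid.toList.injective
        simp only [FreeMonoid.toList_map, FreeMonoid.toList_ofList]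
        exact map_cycleDown_q n (m+1) hmn
      rw [this, Xg_eq, Ew, single_ofList_mul, mul_one]
      rfl
    rw [Pd_succ, _root_.map_mul (actA k n) (Pd k n m) _, Module.End.mul_apply,
      actA_one_sub_of, hrho]
    nth_rewrite 1 [hE2]
    rw [map_sub, (actA_Pd_comm k n m ⟨m+1, hmn⟩ (by simp)).1,
      (actA_Pd_comm k n m ⟨m+1, hmn⟩ (by simp)).2,
      actA_Pd_Ew m hm,
      q_succ n (m+1) hmn, la_append k n _ (q_ne_nil n (m+1) (by omega) (by omega))]

lemma q_top : q n n = List.finRange n := by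
  rw [q]
  exact List.take_of_length_le (by simp)

lemma Phi_eq_act (x : MonoidAlgebra k (Equiv.Perm (Fin n))) :
    Phi k n x = actA k n x (Ew k n n) := by
  induction x using MonoidAlgebra.induction_linear with
  | zero => simp
  | add x y hx hy =>
    rw [map_add, map_add]
    show _ = (actA k n x + actA k n y) (Ew k n n)
    rw [LinearMap.add_apply, hx, hy]
  | single σ c =>
    rw [Phi_single, actA_single, Ew, rho_single]
    have : FreeMonoid.map σ (FreeMonoid.ofList (q n n)) = wordOf n σ := by
      apply FreeMonoid.toList.injective
      simp [FreeMonoid.toList_map, wordOf, q_top]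
    rw [this, MonoidAlgebra.smul_single, smul_eq_mul, mul_one]

theorem dynkin_sq (hn : 0 < n) :
    dynkin k n * dynkin k n = (n : ℕ) • dynkin k n := by
  apply Phi_injective k n
  have hn1 : (n - 1) + 1 = n := by omega
  have key : actA k n (dynkin k n) (Ew k n n) = la k n (q n n) := by
    rw [dynkin_eq_Pd]
    have := actA_Pd_Ew k n (n-1) (by omega)
    rw [hn1] at this
    exact this
  have hbrack : la k n (q n n) = abr k n (Ew k n n) := by
    rw [Ew, abr_single, one_smul]
  have habr : abr k n (la k n (q n n)) = n • la k n (q n n) := by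
    have := abr_la_q k n (n-1) (by omega)
    rw [hn1] at this
    exact this
  rw [map_nsmul, Phi_eq_act, Phi_eq_act, _root_.map_mul (actA k n) _ _, Module.End.mul_apply,
    key, hbrack, ← abr_actA, ← hbrack, key, habr]

end DSW

variable (k : Type) [Field k] (n : ℕ) (V : Type) [AddCommGroup V] [Module k V]

/-- The `n`-th tensor power `V^{⊗n}`. -/
abbrev Tpow := ⨂[k] (_ : Fin n), V

/-- The left action of `σ ∈ S_n` on `V^{⊗n}`, permuting the tensor factors. -/
def permTpow (σ : Equiv.Perm (Fin n)) : Tpow k n V →ₗ[k] Tpow k n V :=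
  (PiTensorProduct.reindex k (fun _ => V) σ).toLinearMap

/-- The left annihilator of the Dynkin element: `Ann_l(θ_n) = {x | x·θ_n = 0}`;
`Lie_n(k) = k[S_n]/Ann_l(θ_n) ≅ k[S_n]·θ_n`. -/
def annL : Submodule k (MonoidAlgebra k (Equiv.Perm (Fin n))) :=
  LinearMap.ker (LinearMap.mulRight k (dynkin k n))

/-- The relations cutting out `V^{⊗n} ⊗ Lie_n` inside `V^{⊗n} ⊗ k[S_n]`
(under `Lie_n = k[S_n]/Ann_l(θ_n)`). -/
def annPart : Submodule k (Tpow k n V ⊗[k] MonoidAlgebra k (Equiv.Perm (Fin n))) :=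
  LinearMap.range (TensorProduct.map (LinearMap.id) (Submodule.subtype (annL k n)))

/-- The antipode-twisted action of the group algebra `k[S_n]` on `V^{⊗n}`:
`single σ c ↦ c • (action of σ⁻¹)`. -/
def actS : MonoidAlgebra k (Equiv.Perm (Fin n)) →ₗ[k] (Tpow k n V →ₗ[k] Tpow k n V) :=
  (Finsupp.lsum k (fun σ => LinearMap.toSpanSingleton k _ (permTpow k n V σ⁻¹))).comp
    (MonoidAlgebra.coeffLinearEquiv k).toLinearMap

/-- The evaluation map `V^{⊗n} ⊗ k[S_n] → V^{⊗n}`, sending `v ⊗ x` to the result of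
evaluating the Lie monomial `x·θ_n` (viewed via the Dynkin element as an iterated
commutator in the tensor algebra) on `v`. -/
def evalLie : Tpow k n V ⊗[k] MonoidAlgebra k (Equiv.Perm (Fin n)) →ₗ[k] Tpow k n V :=
  TensorProduct.lift
    (((actS k n V).comp (LinearMap.mulRight k (dynkin k n))).flip)

/-- The diagonal action of `σ ∈ S_n` on `V^{⊗n} ⊗ k[S_n]`. -/
def diagActT (σ : Equiv.Perm (Fin n)) :
    Tpow k n V ⊗[k] MonoidAlgebra k (Equiv.Perm (Fin n)) →ₗ[k]
      Tpow k n V ⊗[k] MonoidAlgebra k (Equiv.Perm (Fin n)) :=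
  TensorProduct.map (permTpow k n V σ)
    (LinearMap.mulLeft k (MonoidAlgebra.of k (Equiv.Perm (Fin n)) σ))

/-- The coinvariant relations `span{σ•m - m}`. -/
def coinvRel (G M : Type) [AddCommGroup M] [Module k M]
    (ρ : G → (M →ₗ[k] M)) : Submodule k M :=
  Submodule.span k {x | ∃ (σ : G) (m : M), x = ρ σ m - m}

/-- The total relation submodule: `FOLie_n(V) = (V^{⊗n} ⊗ Lie_n)_{S_n}` is the
quotient of `V^{⊗n} ⊗ k[S_n]` by this submodule. -/
def folieRel : Submodule k (Tpow k n V ⊗[k] MonoidAlgebra k (Equiv.Perm (Fin n))) :=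
  annPart k n V ⊔
    coinvRel k (Equiv.Perm (Fin n)) (Tpow k n V ⊗[k] MonoidAlgebra k (Equiv.Perm (Fin n)))
      (diagActT k n V)

namespace Plumb

variable {k : Type} [Field k] {n : ℕ} {V : Type} [AddCommGroup V] [Module k V]

lemma permTpow_mul (σ τ : Equiv.Perm (Fin n)) :
    permTpow k n V (σ * τ) = (permTpow k n V σ).comp (permTpow k n V τ) := by
  have h := PiTensorProduct.reindex_trans (R := k) (s := fun _ : Fin n => V)
    (τ : Fin n ≃ Fin n) (σ : Fin n ≃ Fin n)
  have h2 : ((σ * τ : Equiv.Perm (Fin n)) : Fin n ≃ Fin n)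
      = (τ : Fin n ≃ Fin n).trans (σ : Fin n ≃ Fin n) := rfl
  rw [permTpow, h2, ← h]
  rfl

lemma permTpow_one : permTpow k n V 1 = LinearMap.id := by
  rw [permTpow]
  rw [show ((1 : Equiv.Perm (Fin n)) : Fin n ≃ Fin n) = Equiv.refl (Fin n) from rfl,
    PiTensorProduct.reindex_refl]
  rfl

lemma actS_single (σ : Equiv.Perm (Fin n)) (c : k) :
    actS k n V (MonoidAlgebra.single σ c) = c • permTpow k n V σ⁻¹ := by
  rw [actS, LinearMap.comp_apply, LinearEquiv.coe_coe, MonoidAlgebra.coeffLinearEquiv_apply,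
    MonoidAlgebra.coeff_single]
  exact Finsupp.lsum_single k _ _ _

lemma actS_mul (x y : MonoidAlgebra k (Equiv.Perm (Fin n))) :
    actS k n V (x * y) = (actS k n V y).comp (actS k n V x) := by
  induction x using MonoidAlgebra.induction_linear with
  | zero => simp
  | add a b ha hb => simp only [add_mul, _root_.map_add, ha, hb, LinearMap.comp_add]
  | single σ c =>
    induction y using MonoidAlgebra.induction_linear with
    | zero => simp
    | add a b ha hb => simp only [mul_add, _root_.map_add, ha, hb, LinearMap.add_comp]
    | single τ d =>
      rw [MonoidAlgebra.single_mul_single, actS_single, actS_single, actS_single,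
        mul_inv_rev, permTpow_mul]
      ext v
      simp [mul_smul, smul_comm d c]

/-- evaluation without the Dynkin element -/
def ev0 : Tpow k n V ⊗[k] MonoidAlgebra k (Equiv.Perm (Fin n)) →ₗ[k] Tpow k n V :=
  TensorProduct.lift (actS k n V).flip

lemma ev0_tmul (v : Tpow k n V) (x : MonoidAlgebra k (Equiv.Perm (Fin n))) :
    ev0 (v ⊗ₜ[k] x) = actS k n V x v := rfl

lemma evalLie_eq (a : Tpow k n V ⊗[k] MonoidAlgebra k (Equiv.Perm (Fin n))) :
    evalLie k n V a = actS k n V (dynkin k n) (ev0 a) := by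
  induction a using TensorProduct.induction_on with
  | zero => simp
  | add x y hx hy => rw [_root_.map_add, _root_.map_add, _root_.map_add, hx, hy]
  | tmul v x =>
    rw [ev0_tmul]
    show actS k n V ((LinearMap.mulRight k (dynkin k n)) x) v = _
    rw [LinearMap.mulRight_apply, actS_mul]
    rfl

/-- the map `w ↦ w ⊗ 1` -/
def tens1 : Tpow k n V →ₗ[k] Tpow k n V ⊗[k] MonoidAlgebra k (Equiv.Perm (Fin n)) :=
  (TensorProduct.mk k (Tpow k n V) (MonoidAlgebra k (Equiv.Perm (Fin n)))).flip 1

lemma tens1_apply (w : Tpow k n V) : tens1 w = w ⊗ₜ[k] 1 := rfl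

/-- `m - ev0 m ⊗ 1` as a linear map -/
def Lco : Tpow k n V ⊗[k] MonoidAlgebra k (Equiv.Perm (Fin n)) →ₗ[k]
    Tpow k n V ⊗[k] MonoidAlgebra k (Equiv.Perm (Fin n)) :=
  LinearMap.id - tens1.comp ev0

lemma Lco_apply (m : Tpow k n V ⊗[k] MonoidAlgebra k (Equiv.Perm (Fin n))) :
    Lco m = m - (ev0 m) ⊗ₜ[k] 1 := rfl

lemma Lco_mem_coinv (m : Tpow k n V ⊗[k] MonoidAlgebra k (Equiv.Perm (Fin n))) :
    Lco m ∈ coinvRel k (Equiv.Perm (Fin n)) _ (diagActT k n V) := by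
  induction m using TensorProduct.induction_on with
  | zero => rw [map_zero]; exact zero_mem _
  | add x y hx hy => rw [map_add]; exact add_mem hx hy
  | tmul v x =>
    induction x using MonoidAlgebra.induction_linear with
    | zero => rw [TensorProduct.tmul_zero, map_zero]; exact zero_mem _
    | add a b ha hb => rw [TensorProduct.tmul_add, map_add]; exact add_mem ha hb
    | single σ c =>
      set m0 : Tpow k n V ⊗[k] MonoidAlgebra k (Equiv.Perm (Fin n)) :=
        (permTpow k n V σ⁻¹ v) ⊗ₜ[k] 1 with hm0
      have h1 : ev0 (v ⊗ₜ[k] MonoidAlgebra.single σ c) = c • permTpow k n V σ⁻¹ v := by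
        rw [ev0_tmul, actS_single]
        rfl
      have h2 : diagActT k n V σ m0
          = v ⊗ₜ[k] (MonoidAlgebra.single σ 1) := by
        rw [hm0, diagActT, TensorProduct.map_tmul, LinearMap.mulLeft_apply, mul_one,
          ← LinearMap.comp_apply, ← permTpow_mul, mul_inv_cancel, permTpow_one]
        rfl
      have h3 : Lco (v ⊗ₜ[k] MonoidAlgebra.single σ c)
          = c • (diagActT k n V σ m0 - m0) := by
        rw [h2, Lco_apply, h1, smul_sub]
        congr 1
        · rw [← TensorProduct.tmul_smul, MonoidAlgebra.smul_single, smul_eq_mul, mul_one]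
      rw [h3]
      exact Submodule.smul_mem _ _ (Submodule.subset_span ⟨σ, _, rfl⟩)

end Plumb

/-- over a field of characteristic `p`, if `p ∤ n` then the natural
map `FOLie_n(V) = (V^{⊗n} ⊗ Lie_n)_{S_n} → V^{⊗n}` is injective: any element of
`V^{⊗n} ⊗ k[S_n]` killed by the evaluation map lies in the defining relations of
`FOLie_n(V)`. -/
theorem folie_to_tensor_injective (p : ℕ) [Fact p.Prime] [CharP k p]
    (hn : 0 < n) (hpn : ¬ p ∣ n)
    (a : Tpow k n V ⊗[k] MonoidAlgebra k (Equiv.Perm (Fin n)))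
    (ha : evalLie k n V a = 0) : a ∈ folieRel k n V := by
  classical
  have hnk : (n : k) ≠ 0 := by
    intro h
    exact hpn ((CharP.cast_eq_zero_iff k p n).mp h)
  have hdsq : dynkin k n * dynkin k n = (n : k) • dynkin k n := by
    rw [DSW.dynkin_sq k n hn, Nat.cast_smul_eq_nsmul]
  set θ := dynkin k n with hθ
  set w := Plumb.ev0 a with hwdef
  have hw : actS k n V θ w = 0 := (Plumb.evalLie_eq a).symm.trans ha
  have hann : (1 : MonoidAlgebra k (Equiv.Perm (Fin n))) - (n : k)⁻¹ • θ ∈ annL k n := by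
    show (LinearMap.mulRight k (dynkin k n)) _ = 0
    rw [LinearMap.mulRight_apply, sub_mul, one_mul, smul_mul_assoc, ← hθ, hdsq,
      smul_smul, inv_mul_cancel₀ hnk, one_smul, sub_self]
  have h4 : w ⊗ₜ[k] ((1 : MonoidAlgebra k (Equiv.Perm (Fin n))) - (n:k)⁻¹ • θ)
      ∈ annPart k n V := by
    refine ⟨w ⊗ₜ[k] (⟨_, hann⟩ : annL k n), ?_⟩
    rw [TensorProduct.map_tmul]
    rfl
  have h5 : w ⊗ₜ[k] θ ∈ coinvRel k (Equiv.Perm (Fin n)) _ (diagActT k n V) := by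
    have h := Plumb.Lco_mem_coinv (w ⊗ₜ[k] θ)
    rw [Plumb.Lco_apply, Plumb.ev0_tmul, hw] at h
    simpa using h
  have h6 : a - w ⊗ₜ[k] (1 : MonoidAlgebra k (Equiv.Perm (Fin n)))
      ∈ coinvRel k (Equiv.Perm (Fin n)) _ (diagActT k n V) := by
    have h := Plumb.Lco_mem_coinv a
    rw [Plumb.Lco_apply] at h
    exact h
  have key : a = (a - w ⊗ₜ[k] (1 : MonoidAlgebra k (Equiv.Perm (Fin n))))
      + (w ⊗ₜ[k] ((1 : MonoidAlgebra k (Equiv.Perm (Fin n))) - (n:k)⁻¹ • θ))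
      + (n:k)⁻¹ • (w ⊗ₜ[k] θ) := by
    rw [TensorProduct.tmul_sub, ← TensorProduct.tmul_smul]
    abel
  rw [key, folieRel]
  refine add_mem (add_mem ?_ ?_) ?_
  · exact Submodule.mem_sup_right h6
  · exact Submodule.mem_sup_left h4
  · exact Submodule.smul_mem _ _ (Submodule.mem_sup_right h5)

end
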